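/- Let n be a positive integer and R the n×n real matrix with R_{ij} = C(i-1, n-j). Then for each j with 1 ≤ j ≤ n, the number (-1)^{n+j} a^{2j-n-1} (with a = (1+√5)/2) is an eigenvalue of R. -/

import Mathlib

open Polynomial Matrix

lemma refl1 (c : ℝ) : reflect 1 (C c * X + 1) = X + C c := by
  apply Polynomial.ext
  intro i
  rw [coeff_reflect]
  match i with
  | 0 => simp [revAt_le, coeff_one, coeff_X]
  | 1 => simp [revAt_le, coeff_one, coeff_X]
  | (i+2) =>
      have h1 : revAt 1 (i+2) = i+2 := by
        exact revAt_eq_self_of_lt (by omega)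
      rw [h1]
      simp [coeff_add, coeff_C_mul, coeff_X, coeff_one, coeff_C]

lemma pow_reflect (c : ℝ) (m : ℕ) :
    reflect m ((C c * X + 1) ^ m) = (X + C c) ^ m := by
  induction m with
  | zero => simp
  | succ m ih =>
      have h1 : ((C c * X + 1 : ℝ[X])).natDegree ≤ 1 := by compute_degree
      have h2 : ((C c * X + 1 : ℝ[X]) ^ m).natDegree ≤ m := by compute_degree
      have : ((C c * X + 1 : ℝ[X]) ^ (m+1)) = (C c * X + 1) ^ m * (C c * X + 1) := by
        ring
      rw [this, Polynomial.reflect_mul _ _ h2 h1, ih, refl1]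
      ring

lemma comp_coeff (p : ℝ[X]) (N t : ℕ) (hd : p.natDegree < N) :
    (p.comp (X + 1)).coeff t = ∑ r ∈ Finset.range N, p.coeff r * (r.choose t) := by
  conv_lhs => rw [p.as_sum_range' N hd]
  rw [Polynomial.comp, Polynomial.eval₂_finset_sum, Polynomial.finset_sum_coeff]
  apply Finset.sum_congr rfl
  intro r _
  rw [Polynomial.eval₂_monomial, Polynomial.coeff_C_mul, Polynomial.coeff_X_add_one_pow]

theorem stmt_5 (n : ℕ) (hn : 0 < n)
    (a : ℝ) (ha : a = (1 + Real.sqrt 5) / 2)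
    (R : Matrix (Fin n) (Fin n) ℝ)
    (hR : ∀ i j : Fin n, R i j = (((i : ℕ) + 1 - 1).choose (n - ((j : ℕ) + 1)) : ℝ)) :
    ∀ j : ℕ, 1 ≤ j → j ≤ n →
      ∃ v : Fin n → ℝ, v ≠ 0 ∧
        R.mulVec v = fun i => ((-1 : ℝ) ^ (n + j) * a ^ (2 * (j : ℤ) - n - 1)) * v i := by
  intro j hj1 hjn
  have hs5 : Real.sqrt 5 ^ 2 = 5 := Real.sq_sqrt (by norm_num)
  have hs5nn : 0 ≤ Real.sqrt 5 := Real.sqrt_nonneg 5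
  set b : ℝ := (1 - Real.sqrt 5) / 2 with hb
  have hapos : 0 < a := by rw [ha]; positivity
  have hane : a ≠ 0 := ne_of_gt hapos
  have haa : a * a = a + 1 := by rw [ha]; nlinarith [hs5]
  have hbbb : b * b = b + 1 := by rw [hb, ha] at *; nlinarith [hs5]
  have hab : a * b = -1 := by rw [hb, ha]; nlinarith [hs5]
  set m : ℕ := j - 1 with hm
  set k : ℕ := n - j with hk
  have hnmk : n = m + k + 1 := by omega
  set H : ℝ[X] := (C a * X + 1) ^ m * (C b * X + 1) ^ k with hH
  have hdeg : H.natDegree ≤ m + k := by rw [hH]; compute_degree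
  set lam : ℝ := a ^ m * b ^ k with hlam
  -- composition identity
  have hcomp : H.comp (X + 1) = C lam * ((X + C a) ^ m * (X + C b) ^ k) := by
    have h1 : (C a * (X + 1) + 1 : ℝ[X]) = C a * (X + C a) := by
      rw [mul_add, mul_add, mul_one, ← C_mul, haa, C_add, C_1]; ring
    have h2 : (C b * (X + 1) + 1 : ℝ[X]) = C b * (X + C b) := by
      rw [mul_add, mul_add, mul_one, ← C_mul, hbbb, C_add, C_1]; ring
    rw [hH]
    simp only [mul_comp, pow_comp, add_comp, C_comp, X_comp, one_comp]
    rw [h1, h2, mul_pow, mul_pow, ← C_pow, ← C_pow, hlam, C_mul]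
    ring
  have hrefl : reflect (m + k) H = (X + C a) ^ m * (X + C b) ^ k := by
    rw [hH, Polynomial.reflect_mul _ _ (by compute_degree) (by compute_degree),
      pow_reflect, pow_reflect]
  -- key row-eigenvector identity
  have key : ∀ t : ℕ, t ≤ m + k →
      ∑ r ∈ Finset.range n, H.coeff r * ((r.choose (n - 1 - t) : ℕ) : ℝ) = lam * H.coeff t := by
    intro t ht
    have hd : H.natDegree < n := by omega
    rw [← comp_coeff H n (n - 1 - t) hd, hcomp, Polynomial.coeff_C_mul, ← hrefl,
      coeff_reflect]
    congr 2
    rw [Polynomial.revAt_le (by omega)]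
    omega
  -- the row eigenvector
  set w : Fin n → ℝ := fun i => H.coeff i with hw
  have hwne : w ≠ 0 := by
    intro h0
    have h1 : w ⟨0, hn⟩ = 0 := by rw [h0]; rfl
    rw [hw] at h1
    simp only [Polynomial.coeff_zero_eq_eval_zero, hH] at h1
    simp at h1
  have hvec : w ᵥ* (R - lam • (1 : Matrix (Fin n) (Fin n) ℝ)) = 0 := by
    funext t
    have hRt : ∀ i : Fin n, R i t = ((i : ℕ).choose (n - 1 - (t : ℕ)) : ℝ) := by
      intro i
      rw [hR i t]
      congr 2
      omega
    have : (w ᵥ* R) t = lam * w t := by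
      rw [Matrix.vecMul, dotProduct]
      simp only [hRt]
      rw [← key t (by omega), Finset.sum_range]
    have h2 : (w ᵥ* (lam • (1 : Matrix (Fin n) (Fin n) ℝ))) t = lam * w t := by
      simp [Matrix.vecMul, dotProduct, Matrix.smul_apply, Matrix.one_apply, mul_ite,
        Finset.sum_ite_eq]
      ring
    rw [Matrix.vecMul_sub, Pi.sub_apply, this, h2, Pi.zero_apply, sub_self]
  have hdet : (R - lam • (1 : Matrix (Fin n) (Fin n) ℝ)).det = 0 := by
    rw [← Matrix.exists_vecMul_eq_zero_iff]
    exact ⟨w, hwne, hvec⟩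
  obtain ⟨v, hv0, hveq⟩ := Matrix.exists_mulVec_eq_zero_iff.2 hdet
  refine ⟨v, hv0, ?_⟩
  have hmv : R.mulVec v = lam • v := by
    rw [Matrix.sub_mulVec, Matrix.smul_mulVec, Matrix.one_mulVec] at hveq
    have := sub_eq_zero.1 hveq
    exact this
  have hlameq : lam = (-1 : ℝ) ^ (n + j) * a ^ (2 * (j : ℤ) - ↑n - 1) := by
    have hbinv : b = -a⁻¹ := by
      field_simp
      linarith [hab]
    have h1 : lam = (-1 : ℝ) ^ k * (a ^ m * (a ^ k)⁻¹) := by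
      rw [hlam, hbinv]
      rw [neg_pow, inv_pow]
      ring
    have h2 : ((-1 : ℝ)) ^ (n + j) = (-1 : ℝ) ^ k := by
      have : n + j = k + 2 * j := by omega
      rw [this, pow_add, pow_mul]
      norm_num
    have h3 : a ^ (2 * (j : ℤ) - ↑n - 1) = a ^ m * (a ^ k)⁻¹ := by
      have : 2 * (j : ℤ) - ↑n - 1 = (m : ℤ) - (k : ℤ) := by
        rw [hm, hk]
        push_cast [Nat.cast_sub hj1, Nat.cast_sub hjn]
        ring
      rw [this, zpow_sub₀ hane, zpow_natCast, zpow_natCast]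
      rfl
    rw [h1, h2, h3]
  funext i
  rw [hmv, Pi.smul_apply, smul_eq_mul, ← hlameq]
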